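/- Let f : R → R be M-Lipschitz, β-smooth (f' is β-Lipschitz), twice differentiable, and strictly increasing, let α > 0, and fix x ∈ R^d, y ∈ {+1,−1}. Then g(w) = f(−y⟨w,x⟩ + α‖w‖) is twice differentiable at every w ≠ 0, and its Hessian there satisfies ∇²g(w) ⪯ β'·I with β' = αM/‖w‖ + β(‖x‖ + α)²; that is, for every direction v ∈ R^d, ⟨∇²g(w)v, v⟩ ≤ (αM/‖w‖ + β(‖x‖+α)²)·‖v‖². -/

import Mathlib

set_option maxHeartbeats 1000000


open scoped RealInnerProductSpace

section Aux

variable {E : Type*} [NormedAddCommGroup E] [InnerProductSpace ℝ E]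

/-- The inner product as a continuous linear map, real case. -/
noncomputable def innerCLM : E →L[ℝ] E →L[ℝ] ℝ := innerSL ℝ

@[simp] lemma innerCLM_apply (u v : E) : innerCLM u v = ⟪u, v⟫ := rfl

lemma norm_hasFDerivAt' {w : E} (hw : w ≠ 0) :
    HasFDerivAt (fun u : E => ‖u‖) ((‖w‖⁻¹ : ℝ) • innerCLM w) w := by
  have hw0 : (0:ℝ) < ‖w‖ := norm_pos_iff.mpr hw
  have h1 : HasFDerivAt (fun u : E => ‖u‖ ^ 2) (2 • (innerSL ℝ w)) w :=
    (hasStrictFDerivAt_norm_sq w).hasFDerivAt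
  have h2 : (‖w‖ : ℝ) ^ 2 ≠ 0 := by positivity
  have h3 := h1.sqrt h2
  have h4 : (fun u : E => Real.sqrt (‖u‖ ^ 2)) = fun u : E => ‖u‖ := by
    funext u; rw [Real.sqrt_sq (norm_nonneg u)]
  rw [h4, Real.sqrt_sq (norm_nonneg w)] at h3
  have h5 : (1 / (2 * ‖w‖) : ℝ) • (2:ℝ) • (innerSL ℝ w) = (‖w‖⁻¹ : ℝ) • innerSL ℝ w := by
    rw [smul_smul]; congr 1; field_simp
  rwa [show ((2:ℕ) • (innerSL ℝ w)) = (2:ℝ) • (innerSL ℝ w) by rw [two_smul, two_smul], h5] at h3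

variable (α y : ℝ) (x : E)

/-- The derivative of `u ↦ -y⟪u,x⟫ + α‖u‖` as a function of `u`. -/
noncomputable def Phi (u : E) : E →L[ℝ] ℝ :=
  (-y) • innerCLM x + (α * ‖u‖⁻¹) • innerCLM u

lemma phi_hasFDerivAt {u : E} (hu : u ≠ 0) :
    HasFDerivAt (fun u : E => -y * ⟪u, x⟫ + α * ‖u‖) (Phi α y x u) u := by
  have h1 : HasFDerivAt (fun u : E => ⟪u, x⟫) (innerCLM x) u := by
    have : (fun u : E => ⟪u, x⟫) = fun u : E => innerCLM x u := by
      funext u; exact real_inner_comm _ _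
    rw [this]; exact (innerCLM x).hasFDerivAt
  have h2 := (h1.const_mul (-y)).add ((norm_hasFDerivAt' hu).const_mul α)
  refine h2.congr_fderiv (Eq.symm ?_)
  unfold Phi
  rw [smul_comm α, smul_smul]
  ring_nf

lemma Phi_hasFDerivAt {w : E} (hw : w ≠ 0) :
    HasFDerivAt (Phi α y x)
      ((α * ‖w‖⁻¹) • (innerCLM : E →L[ℝ] E →L[ℝ] ℝ) +
        (((-α * (‖w‖ ^ 2)⁻¹) * ‖w‖⁻¹) • innerCLM w).smulRight (innerCLM w)) w := by
  have hw0 : (0:ℝ) < ‖w‖ := norm_pos_iff.mpr hw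
  have hinv : HasDerivAt (fun t : ℝ => t⁻¹) (-((‖w‖:ℝ) ^ 2)⁻¹) ‖w‖ := hasDerivAt_inv hw0.ne'
  have hs : HasFDerivAt (fun u : E => α * ‖u‖⁻¹)
      (((-α * (‖w‖ ^ 2)⁻¹) * ‖w‖⁻¹) • innerCLM w) w := by
    have h := (hinv.comp_hasFDerivAt w (norm_hasFDerivAt' hw)).const_mul α
    refine h.congr_fderiv (Eq.symm ?_)
    rw [smul_smul, smul_smul]; congr 1; ring
  have hT : HasFDerivAt (fun u : E => innerCLM u) (innerCLM : E →L[ℝ] E →L[ℝ] ℝ) w :=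
    innerCLM.hasFDerivAt
  have h2 := hs.smul hT
  have h3 := (hasFDerivAt_const ((-y) • innerCLM x : E →L[ℝ] ℝ) w).add h2
  unfold Phi
  rwa [zero_add] at h3

end Aux

lemma deriv_abs_le_of_lip {f : ℝ → ℝ} {M : ℝ} (hM : 0 ≤ M)
    (h : ∀ a b : ℝ, |f a - f b| ≤ M * |a - b|) (t : ℝ) : |deriv f t| ≤ M := by
  have hlip : LipschitzWith M.toNNReal f := by
    apply LipschitzWith.of_dist_le_mul
    intro a b
    rw [Real.dist_eq, Real.dist_eq, Real.coe_toNNReal M hM]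
    exact h a b
  have h1 : ‖fderiv ℝ f t‖ ≤ M.toNNReal := norm_fderiv_le_of_lipschitz ℝ hlip
  have h2 : |deriv f t| ≤ ‖fderiv ℝ f t‖ := by
    rw [← fderiv_apply_one_eq_deriv]
    calc |(fderiv ℝ f t) 1| ≤ ‖fderiv ℝ f t‖ * ‖(1:ℝ)‖ := (fderiv ℝ f t).le_opNorm 1
    _ = ‖fderiv ℝ f t‖ := by simp
  exact h2.trans (by rwa [Real.coe_toNNReal M hM] at h1)

lemma deriv_nonneg_of_strictMono {f : ℝ → ℝ} (hd : Differentiable ℝ f)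
    (hm : StrictMono f) (t : ℝ) : 0 ≤ deriv f t := by
  have h := (hd t).hasDerivAt
  rw [hasDerivAt_iff_tendsto_slope] at h
  refine ge_of_tendsto h ?_
  filter_upwards [self_mem_nhdsWithin] with z hz
  have hz' : z ≠ t := hz
  rcases lt_or_gt_of_ne hz' with h1 | h1
  · have : f z ≤ f t := (hm h1).le
    rw [slope_def_field]
    apply div_nonneg_iff.mpr; right; constructor <;> linarith
  · have : f t ≤ f z := (hm h1).le
    rw [slope_def_field]
    exact div_nonneg (by linarith) (by linarith)

/-- For `f` `M`-Lipschitz, `β`-smooth, twice differentiable and strictly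
increasing, and `α > 0`, the robust loss `g(w) = f(−y⟪w,x⟫ + α‖w‖)` is twice
differentiable at every `w ≠ 0`, with Hessian bounded by
`β' = αM/‖w‖ + β(‖x‖+α)²` in the sense that `⟪∇²g(w)v, v⟫ ≤ β'‖v‖²` for all `v`. -/
theorem robust_loss_hessian_bound
    (d : ℕ) (f : ℝ → ℝ) (M β : ℝ)
    (hLip : ∀ a b : ℝ, |f a - f b| ≤ M * |a - b|)
    (hSmooth : ∀ a b : ℝ, |deriv f a - deriv f b| ≤ β * |a - b|)
    (hdiff : Differentiable ℝ f) (hdiff2 : Differentiable ℝ (deriv f))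
    (hmono : StrictMono f)
    (α : ℝ) (hα : 0 < α) (x : EuclideanSpace ℝ (Fin d)) (y : ℝ) (hy : y = 1 ∨ y = -1)
    (w : EuclideanSpace ℝ (Fin d)) (hw : w ≠ 0) :
    (∀ᶠ u in nhds w, DifferentiableAt ℝ
        (fun u : EuclideanSpace ℝ (Fin d) => f (-y * ⟪u, x⟫ + α * ‖u‖)) u) ∧
    ∃ H : EuclideanSpace ℝ (Fin d) →L[ℝ] (EuclideanSpace ℝ (Fin d) →L[ℝ] ℝ),
      HasFDerivAt (fderiv ℝ (fun u : EuclideanSpace ℝ (Fin d) => f (-y * ⟪u, x⟫ + α * ‖u‖))) H w ∧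
      ∀ v : EuclideanSpace ℝ (Fin d),
        H v v ≤ (α * M / ‖w‖ + β * (‖x‖ + α) ^ 2) * ‖v‖ ^ 2 := by
  have hw0 : (0:ℝ) < ‖w‖ := norm_pos_iff.mpr hw
  have hM0 : 0 ≤ M := le_trans (abs_nonneg (f 0 - f 1)) (by simpa using hLip 0 1)
  have hβ0 : 0 ≤ β :=
    le_trans (abs_nonneg (deriv f 0 - deriv f 1)) (by simpa using hSmooth 0 1)
  have hfd : ∀ t, |deriv f t| ≤ M := deriv_abs_le_of_lip hM0 hLip
  have hfd2 : ∀ t, |deriv (deriv f) t| ≤ β := deriv_abs_le_of_lip hβ0 hSmooth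
  have hfpos : ∀ t, 0 ≤ deriv f t := deriv_nonneg_of_strictMono hdiff hmono
  set φ : EuclideanSpace ℝ (Fin d) → ℝ := fun u => -y * ⟪u, x⟫ + α * ‖u‖ with hφdef
  have hmem : {(0:EuclideanSpace ℝ (Fin d))}ᶜ ∈ nhds w := compl_singleton_mem_nhds hw
  have hg : ∀ u : EuclideanSpace ℝ (Fin d), u ≠ 0 →
      HasFDerivAt (fun u : EuclideanSpace ℝ (Fin d) => f (-y * ⟪u, x⟫ + α * ‖u‖))
        (deriv f (φ u) • Phi α y x u) u := fun u hu =>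
    ((hdiff (φ u)).hasDerivAt).comp_hasFDerivAt u (phi_hasFDerivAt α y x hu)
  constructor
  · exact Filter.eventually_of_mem hmem fun u hu => (hg u hu).differentiableAt
  · set Ψ : EuclideanSpace ℝ (Fin d) →L[ℝ] (EuclideanSpace ℝ (Fin d) →L[ℝ] ℝ) :=
      (α * ‖w‖⁻¹) • (innerCLM : EuclideanSpace ℝ (Fin d) →L[ℝ] EuclideanSpace ℝ (Fin d) →L[ℝ] ℝ) +
        (((-α * (‖w‖ ^ 2)⁻¹) * ‖w‖⁻¹) • innerCLM w).smulRight (innerCLM w) with hΨdef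
    have hc : HasFDerivAt (fun u => deriv f (φ u))
        (deriv (deriv f) (φ w) • Phi α y x w) w :=
      ((hdiff2 (φ w)).hasDerivAt).comp_hasFDerivAt w (phi_hasFDerivAt α y x hw)
    have hG : HasFDerivAt (fun u => deriv f (φ u) • Phi α y x u)
        (deriv f (φ w) • Ψ +
          (deriv (deriv f) (φ w) • Phi α y x w).smulRight (Phi α y x w)) w :=
      hc.smul (Phi_hasFDerivAt α y x hw)
    refine ⟨_, hG.congr_of_eventuallyEq ?_, ?_⟩
    · exact Filter.eventuallyEq_of_mem hmem fun u hu => (hg u hu).fderiv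
    · intro v
      have hy1 : |y| = 1 := by rcases hy with h | h <;> simp [h]
      set A : ℝ := Phi α y x w v with hA
      have hAval : A = -y * ⟪x, v⟫ + α * ‖w‖⁻¹ * ⟪w, v⟫ := by
        simp [hA, Phi, mul_assoc]
      have hHvv : (deriv f (φ w) • Ψ +
          (deriv (deriv f) (φ w) • Phi α y x w).smulRight (Phi α y x w)) v v =
          deriv f (φ w) * (α * ‖w‖⁻¹ * ⟪v, v⟫ +
            (-α * (‖w‖ ^ 2)⁻¹ * ‖w‖⁻¹ * ⟪w, v⟫) * ⟪w, v⟫) +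
          deriv (deriv f) (φ w) * A * A := by
        set_option synthInstance.maxHeartbeats 200000 in
        simp [hΨdef, hA, ContinuousLinearMap.smulRight_apply, mul_assoc]
        ring
      rw [hHvv]
      have hvv : ⟪v, v⟫ = ‖v‖ ^ 2 := real_inner_self_eq_norm_sq v
      -- Cauchy-Schwarz facts
      have hCS : |⟪w, v⟫| ≤ ‖w‖ * ‖v‖ := abs_real_inner_le_norm w v
      have hCS2 : ⟪w, v⟫ ^ 2 ≤ ‖w‖ ^ 2 * ‖v‖ ^ 2 := by
        have h := mul_self_le_mul_self (abs_nonneg ⟪w, v⟫) hCS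
        rw [abs_mul_abs_self] at h
        nlinarith
      have hCSx : |⟪x, v⟫| ≤ ‖x‖ * ‖v‖ := abs_real_inner_le_norm x v
      -- bound on A
      have hAbound : |A| ≤ (‖x‖ + α) * ‖v‖ := by
        rw [hAval]
        calc |(-y) * ⟪x, v⟫ + α * ‖w‖⁻¹ * ⟪w, v⟫|
            ≤ |(-y) * ⟪x, v⟫| + |α * ‖w‖⁻¹ * ⟪w, v⟫| := abs_add_le _ _
          _ ≤ ‖x‖ * ‖v‖ + α * ‖v‖ := by
              gcongr
              · rw [abs_mul, abs_neg, hy1, one_mul]; exact hCSx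
              · rw [abs_mul, abs_mul, abs_of_pos hα, abs_of_pos (inv_pos.mpr hw0)]
                calc α * ‖w‖⁻¹ * |⟪w, v⟫| ≤ α * ‖w‖⁻¹ * (‖w‖ * ‖v‖) := by gcongr
                  _ = α * ‖v‖ := by field_simp
          _ = (‖x‖ + α) * ‖v‖ := by ring
      have hA2 : A * A ≤ (‖x‖ + α) ^ 2 * ‖v‖ ^ 2 := by
        have h2 := mul_self_le_mul_self (abs_nonneg A) hAbound
        rw [abs_mul_abs_self] at h2
        calc A * A ≤ (‖x‖ + α) * ‖v‖ * ((‖x‖ + α) * ‖v‖) := h2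
          _ = (‖x‖ + α) ^ 2 * ‖v‖ ^ 2 := by ring
      -- the second-derivative term
      have hterm2 : deriv (deriv f) (φ w) * A * A ≤ β * ((‖x‖ + α) ^ 2 * ‖v‖ ^ 2) := by
        calc deriv (deriv f) (φ w) * A * A
            = deriv (deriv f) (φ w) * (A * A) := by ring
          _ ≤ |deriv (deriv f) (φ w)| * (A * A) :=
              mul_le_mul_of_nonneg_right (le_abs_self _) (mul_self_nonneg A)
          _ ≤ β * ((‖x‖ + α) ^ 2 * ‖v‖ ^ 2) :=
              mul_le_mul (hfd2 _) hA2 (mul_self_nonneg A) hβ0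
      -- the first-derivative term
      set B : ℝ := α * ‖w‖⁻¹ * ⟪v, v⟫ + (-α * (‖w‖ ^ 2)⁻¹ * ‖w‖⁻¹ * ⟪w, v⟫) * ⟪w, v⟫ with hBdef
      have hBval : B = α * (‖w‖ ^ 2)⁻¹ * ‖w‖⁻¹ * (‖w‖ ^ 2 * ‖v‖ ^ 2 - ⟪w, v⟫ ^ 2) := by
        rw [hBdef, hvv]
        field_simp
        ring
      have hB0 : 0 ≤ B := by
        rw [hBval]
        apply mul_nonneg (by positivity) (by linarith)
      have hB1 : B ≤ α * ‖w‖⁻¹ * ‖v‖ ^ 2 := by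
        rw [hBval]
        have hpos : (0:ℝ) ≤ α * (‖w‖ ^ 2)⁻¹ * ‖w‖⁻¹ := by positivity
        have h1 : α * (‖w‖ ^ 2)⁻¹ * ‖w‖⁻¹ * (‖w‖ ^ 2 * ‖v‖ ^ 2 - ⟪w, v⟫ ^ 2)
            ≤ α * (‖w‖ ^ 2)⁻¹ * ‖w‖⁻¹ * (‖w‖ ^ 2 * ‖v‖ ^ 2) :=
          mul_le_mul_of_nonneg_left (sub_le_self _ (sq_nonneg ⟪w, v⟫)) hpos
        calc _ ≤ α * (‖w‖ ^ 2)⁻¹ * ‖w‖⁻¹ * (‖w‖ ^ 2 * ‖v‖ ^ 2) := h1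
          _ = α * ‖w‖⁻¹ * ‖v‖ ^ 2 := by field_simp
      have hterm1 : deriv f (φ w) * B ≤ M * (α * ‖w‖⁻¹ * ‖v‖ ^ 2) := by
        have hle : deriv f (φ w) ≤ M := (le_abs_self _).trans (hfd _)
        calc deriv f (φ w) * B ≤ M * B := mul_le_mul_of_nonneg_right hle hB0
          _ ≤ M * (α * ‖w‖⁻¹ * ‖v‖ ^ 2) := mul_le_mul_of_nonneg_left hB1 hM0
      have hfinal : α * M / ‖w‖ * ‖v‖ ^ 2 = M * (α * ‖w‖⁻¹ * ‖v‖ ^ 2) := by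
        field_simp
      calc deriv f (φ w) * B + deriv (deriv f) (φ w) * A * A
          ≤ M * (α * ‖w‖⁻¹ * ‖v‖ ^ 2) + β * ((‖x‖ + α) ^ 2 * ‖v‖ ^ 2) :=
            add_le_add hterm1 hterm2
        _ = (α * M / ‖w‖ + β * (‖x‖ + α) ^ 2) * ‖v‖ ^ 2 := by
            rw [add_mul, hfinal]; ring
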